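/- arXiv:1604.02740 — 2 statements merged into one kernel-verified Lean document; each statement's English description precedes it below -/
import Mathlib

section
/- For every real t and real x > 0, one has M_x(1/2 + it) · log x = (1/(2πi)) ∫_{(1)} x^z / ζ(1/2 + it + z) · dz/z², where the integral is over the vertical line Re z = 1. -/
open Complex MeasureTheory Real Set Filter FourierTransform RealInnerProductSpace
lemma tendsto_mul_exp_neg {r : ℝ} (hr : 0 < r) :
    Tendsto (fun t : ℝ => t * Real.exp (-(r * t))) atTop (nhds 0) := by
  have h1 : Tendsto (fun t : ℝ => r * t) atTop atTop :=
    Tendsto.const_mul_atTop hr tendsto_id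
  have h2 := (tendsto_pow_mul_exp_neg_atTop_nhds_zero 1).comp h1
  have h3 := h2.const_mul (1 / r)
  rw [mul_zero] at h3
  refine h3.congr fun t => ?_
  simp only [Function.comp_apply, pow_one]
  field_simp

lemma norm_texp {b : ℂ} (t : ℝ) (ht : 0 ≤ t) : ‖(t : ℂ) * Complex.exp (-(b * t))‖
      = t * Real.exp (-(b.re * t)) := by
  rw [norm_mul, Complex.norm_real, Real.norm_eq_abs, Complex.norm_exp,
    _root_.abs_of_nonneg ht]
  congr 2
  simp [Complex.mul_re]

lemma int_mul_exp {b : ℂ} (hb : 0 < b.re) :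
    ∫ t in Ioi (0:ℝ), (t : ℂ) * Complex.exp (-(b * t)) = 1 / b ^ 2 := by
  have hb0 : b ≠ 0 := fun h => by simp [h] at hb
  have hint : IntegrableOn (fun t : ℝ => (t : ℂ) * Complex.exp (-(b * t))) (Ioi 0) := by
    have h1 : IntegrableOn (fun t : ℝ => t ^ (1:ℝ) * Real.exp (-b.re * t ^ (1:ℝ))) (Ioi 0) :=
      integrableOn_rpow_mul_exp_neg_mul_rpow (by norm_num) zero_lt_one hb
    refine Integrable.mono' h1 ?_ ?_
    · exact (Complex.continuous_ofReal.mul (Complex.continuous_exp.comp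
        (by fun_prop))).aestronglyMeasurable.restrict
    · filter_upwards [ae_restrict_mem measurableSet_Ioi] with t ht
      rw [norm_texp t (le_of_lt ht), Real.rpow_one, neg_mul]
  have hderiv : ∀ t ∈ Ioi (0:ℝ),
      HasDerivAt (fun t : ℝ => -((t : ℂ) / b + 1 / b ^ 2) * Complex.exp (-(b * t)))
        ((t : ℂ) * Complex.exp (-(b * t))) t := by
    intro t _
    have h1 : HasDerivAt (fun t : ℝ => ((t : ℂ) / b + 1 / b ^ 2)) (1 / b) t := by
      have := ((Complex.ofRealCLM.hasDerivAt (x := t)).div_const b).add_const (1 / b^2)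
      simpa [one_div] using this
    have h2 : HasDerivAt (fun t : ℝ => Complex.exp (-(b * t))) (-b * Complex.exp (-(b*t))) t := by
      have := ((Complex.ofRealCLM.hasDerivAt (x := t)).const_mul b).neg.cexp
      simp only [ContinuousLinearMap.coe_coe, Complex.ofRealCLM_apply, Pi.neg_apply] at this
      convert this using 1
      push_cast
      ring
    have h3 := h1.neg.mul h2
    refine (h3.congr_deriv (by simp only [Pi.neg_apply]; rfl)).congr_deriv ?_
    have hexp : Complex.exp (-(b * t)) ≠ 0 := Complex.exp_ne_zero _
    field_simp
    ring
  have hlim : Tendsto (fun t : ℝ => -((t : ℂ) / b + 1 / b ^ 2) * Complex.exp (-(b * t)))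
      atTop (nhds 0) := by
    have hg : Tendsto (fun t : ℝ => (t / ‖b‖ + 1 / ‖b‖ ^ 2) * Real.exp (-(b.re * t)))
        atTop (nhds 0) := by
      have h1 := (tendsto_mul_exp_neg hb).const_mul (1 / ‖b‖)
      have h2 := (Real.tendsto_exp_neg_atTop_nhds_zero.comp
        (Tendsto.const_mul_atTop hb tendsto_id)).const_mul (1 / ‖b‖ ^ 2)
      rw [mul_zero] at h1 h2
      have h4 := h1.add h2
      rw [add_zero] at h4
      refine h4.congr fun t => ?_
      simp only [Function.comp_apply, id]
      ring
    refine squeeze_zero_norm' ?_ hg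
    filter_upwards [eventually_ge_atTop (0:ℝ)] with t ht
    rw [norm_mul, norm_neg]
    have e1 : ‖Complex.exp (-(b * t))‖ = Real.exp (-(b.re * t)) := by
      rw [Complex.norm_exp]
      congr 1
      simp [Complex.mul_re]
    rw [e1]
    have e2 : ‖(t : ℂ) / b + 1 / b ^ 2‖ ≤ t / ‖b‖ + 1 / ‖b‖ ^ 2 := by
      refine (norm_add_le _ _).trans (le_of_eq ?_)
      rw [norm_div, norm_div, norm_one, norm_pow, Complex.norm_real t,
        Real.norm_eq_abs, _root_.abs_of_nonneg ht]
    exact mul_le_mul_of_nonneg_right e2 (Real.exp_nonneg _)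
  have := integral_Ioi_of_hasDerivAt_of_tendsto (a := 0)
    (Continuous.continuousWithinAt (by fun_prop)) hderiv hint hlim
  rw [this]
  simp


lemma intOn_mul_exp {b : ℂ} (hb : 0 < b.re) :
    IntegrableOn (fun t : ℝ => (t : ℂ) * Complex.exp (-(b * t))) (Ioi 0) := by
  have h1 : IntegrableOn (fun t : ℝ => t ^ (1:ℝ) * Real.exp (-b.re * t ^ (1:ℝ))) (Ioi 0) :=
    integrableOn_rpow_mul_exp_neg_mul_rpow (by norm_num) zero_lt_one hb
  refine Integrable.mono' h1 ?_ ?_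
  · exact (Complex.continuous_ofReal.mul (Complex.continuous_exp.comp
      (by fun_prop))).aestronglyMeasurable.restrict
  · filter_upwards [ae_restrict_mem measurableSet_Ioi] with t ht
    rw [Real.rpow_one, neg_mul, norm_mul, Complex.norm_real, Real.norm_eq_abs,
      Complex.norm_exp, _root_.abs_of_nonneg (le_of_lt ht)]
    apply le_of_eq
    congr 2
    simp [Complex.mul_re]

noncomputable def f0 : ℝ → ℂ := fun u => (Ioi (0:ℝ)).indicator (fun v => (v:ℂ) * Complex.exp (-v)) u

lemma f0_eq (u : ℝ) : f0 u = ((max u 0 : ℝ) : ℂ) * Complex.exp (-(max u 0 : ℝ)) := by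
  unfold f0
  by_cases h : 0 < u
  · rw [indicator_of_mem (mem_Ioi.2 h), max_eq_left (le_of_lt h)]
  · rw [indicator_of_notMem (by simpa using h), max_eq_right (not_lt.1 h)]
    simp

lemma f0_cont : Continuous f0 := by
  have : Continuous fun u : ℝ => ((max u 0 : ℝ) : ℂ) * Complex.exp (-(max u 0 : ℝ)) := by
    fun_prop
  exact this.congr fun u => (f0_eq u).symm

lemma f0_integrable : Integrable f0 := by
  unfold f0
  rw [integrable_indicator_iff measurableSet_Ioi]
  have := intOn_mul_exp (b := 1) (by norm_num)
  refine this.congr_fun (fun t _ => by simp) measurableSet_Ioi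

lemma hne (τ : ℝ) : (1 + 2 * (π:ℂ) * τ * I) ≠ 0 := by
  intro h
  have := congrArg Complex.re h
  simp at this

lemma fourier_f0 (τ : ℝ) : 𝓕 f0 τ = 1 / (1 + 2 * π * τ * I) ^ 2 := by
  rw [Real.fourier_eq']
  have h1 : ∀ v : ℝ, Complex.exp (((-2 * π * (inner ℝ v τ : ℝ) : ℝ) : ℂ) * I) • f0 v
      = (Ioi (0:ℝ)).indicator (fun v => (v:ℂ) * Complex.exp (-((1 + 2*π*τ*I) * v))) v := by
    intro v
    by_cases h : v ∈ Ioi (0:ℝ)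
    · rw [indicator_of_mem h]
      unfold f0
      rw [indicator_of_mem h, smul_eq_mul, ← mul_assoc, mul_comm _ (v:ℂ), mul_assoc,
        ← Complex.exp_add]
      congr 2
      have : (inner ℝ v τ : ℝ) = v * τ := Real.inner_apply v τ
      rw [this]
      push_cast
      ring
    · unfold f0
      rw [indicator_of_notMem h, indicator_of_notMem h, smul_zero]
  rw [integral_congr_ae (Eventually.of_forall h1), integral_indicator measurableSet_Ioi]
  exact int_mul_exp (by simp)
lemma fourier_f0_integrable : Integrable (𝓕 f0) := by
  refine integrable_inv_one_add_sq.mono' ?_ ?_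
  · have hc : Continuous fun τ : ℝ => 1 / (1 + 2*(π:ℂ)*τ*I)^2 :=
      continuous_const.div (by fun_prop) (fun τ => pow_ne_zero _ (hne τ))
    exact (hc.congr fun τ => (fourier_f0 τ).symm).aestronglyMeasurable
  · refine Eventually.of_forall fun τ => ?_
    rw [fourier_f0, norm_div, norm_one, norm_pow]
    have e : ‖(1 + 2*(π:ℂ)*τ*I)‖^2 = 1 + (2*π*τ)^2 := by
      rw [Complex.sq_norm, Complex.normSq_apply]
      simp
      ring
    rw [e, one_div]
    have hπ := Real.pi_gt_three
    apply inv_anti₀ (by positivity)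
    nlinarith [mul_nonneg (by nlinarith : (0:ℝ) ≤ 4*π^2-1) (sq_nonneg τ)]

lemma perron_kernel (y : ℝ) (hy : 0 < y) :
    ∫ τ : ℝ, ((y:ℂ) ^ (1 + (τ:ℂ) * I) / (1 + (τ:ℂ) * I) ^ 2) * I
      = 2 * π * I * (if 1 < y then (Real.log y : ℂ) else 0) := by
  have hy0 : (y:ℂ) ≠ 0 := Complex.ofReal_ne_zero.2 (ne_of_gt hy)
  set u := Real.log y with hu
  have hinv := f0_cont.fourierInv_fourier_eq f0_integrable fourier_f0_integrable
  have hpt : f0 u = ∫ σ : ℝ, Complex.exp (((2 * π * (σ * u) : ℝ) : ℂ) * I)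
      / (1 + 2*π*σ*I)^2 := by
    conv_lhs => rw [← hinv]
    rw [Real.fourierInv_eq']
    congr 1
    ext σ
    rw [fourier_f0, smul_eq_mul]
    have : (inner ℝ σ u : ℝ) = σ * u := Real.inner_apply σ u
    rw [this]
    ring
  -- change of variables
  set g : ℝ → ℂ := fun τ => ((y:ℂ) ^ (1 + (τ:ℂ) * I) / (1 + (τ:ℂ) * I) ^ 2) * I with hg
  have hcv : ∫ σ : ℝ, g (2 * π * σ) = |(2*π:ℝ)⁻¹| • ∫ τ, g τ :=
    MeasureTheory.Measure.integral_comp_mul_left g (2*π)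
  have hcv2 : ∫ τ, g τ = (2*π:ℝ) • ∫ σ : ℝ, g (2 * π * σ) := by
    rw [hcv, smul_smul, abs_of_pos (by positivity)]
    rw [mul_inv_cancel₀ (by positivity), one_smul]
  have hcpow : ∀ τ : ℝ, (y:ℂ) ^ (1 + (τ:ℂ) * I) = y * Complex.exp (((τ * u : ℝ):ℂ) * I) := by
    intro τ
    rw [Complex.cpow_def_of_ne_zero hy0, ← Complex.ofReal_log hy.le, ← hu]
    have e : (u:ℂ) * (1 + (τ:ℂ) * I) = (u:ℂ) + ((τ * u : ℝ):ℂ) * I := by push_cast; ring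
    rw [e, Complex.exp_add]
    congr 1
    rw [← Complex.ofReal_exp, hu, Real.exp_log hy]
  have hgval : ∀ σ : ℝ, g (2 * π * σ) = (y * I) * (Complex.exp (((2 * π * (σ * u) : ℝ) : ℂ) * I)
      / (1 + 2*π*σ*I)^2) := by
    intro σ
    rw [hg]
    simp only
    rw [hcpow (2*π*σ)]
    have e1 : ((2 * π * σ * u : ℝ) : ℂ) = ((2 * π * (σ * u) : ℝ) : ℂ) := by push_cast; ring
    have e2 : (1 + ((2 * π * σ : ℝ):ℂ) * I) = 1 + 2*(π:ℂ)*σ*I := by push_cast; ring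
    rw [e1, e2]
    ring
  calc ∫ τ, g τ = (2*π:ℝ) • ∫ σ : ℝ, g (2 * π * σ) := hcv2
    _ = (2*π:ℝ) • ((y * I) * ∫ σ : ℝ, Complex.exp (((2 * π * (σ * u) : ℝ) : ℂ) * I)
        / (1 + 2*π*σ*I)^2) := by
        rw [← integral_const_mul]
        congr 1
        exact integral_congr_ae (Eventually.of_forall hgval)
    _ = (2*π:ℝ) • ((y * I) * f0 u) := by rw [← hpt]
    _ = 2 * π * I * (if 1 < y then (Real.log y : ℂ) else 0) := by
        rw [f0_eq]
        by_cases h : 1 < y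
        · have hu0 : 0 < u := Real.log_pos h
          rw [if_pos h, max_eq_left hu0.le]
          have : Complex.exp (-(u:ℂ)) = (y:ℂ)⁻¹ := by
            rw [Complex.exp_neg, ← Complex.ofReal_exp, hu, Real.exp_log hy]
          rw [this]
          rw [real_smul]
          push_cast
          field_simp
          ring
        · have hu0 : u ≤ 0 := Real.log_nonpos hy.le (not_lt.1 h)
          rw [if_neg h, max_eq_right hu0]
          simp
lemma hne1 (τ : ℝ) : (1 : ℂ) + τ * I ≠ 0 := by
  intro h
  have := congrArg Complex.re h
  simp at this

noncomputable def K (y : ℝ) (τ : ℝ) : ℂ := (y:ℂ) ^ (1 + (τ:ℂ) * I) / (1 + (τ:ℂ) * I) ^ 2 * I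

lemma K_zero : K 0 = fun _ => 0 := by
  funext τ
  unfold K
  rw [Complex.ofReal_zero, Complex.zero_cpow (hne1 τ), zero_div, zero_mul]

lemma K_cont {y : ℝ} (hy : 0 < y) : Continuous (K y) := by
  have hy0 : (y:ℂ) ≠ 0 := Complex.ofReal_ne_zero.2 (ne_of_gt hy)
  have : Continuous fun τ : ℝ =>
      Complex.exp (Complex.log y * (1 + (τ:ℂ) * I)) / (1 + (τ:ℂ) * I) ^ 2 * I := by
    refine Continuous.mul ?_ continuous_const
    exact (Complex.continuous_exp.comp (by fun_prop)).div (by fun_prop)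
      (fun τ => pow_ne_zero _ (hne1 τ))
  refine this.congr fun τ => ?_
  unfold K
  rw [Complex.cpow_def_of_ne_zero hy0]

lemma K_norm {y : ℝ} (hy : 0 ≤ y) (τ : ℝ) : ‖K y τ‖ = y * ((1:ℝ) + τ^2)⁻¹ := by
  rcases eq_or_lt_of_le hy with h | h
  · rw [← h, K_zero]
    simp
  · unfold K
    rw [norm_mul, Complex.norm_I, mul_one, norm_div, norm_pow]
    have e1 : ‖(y:ℂ) ^ (1 + (τ:ℂ) * I)‖ = y := by
      rw [Complex.norm_cpow_eq_rpow_re_of_pos h]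
      simp
    have e2 : ‖(1 : ℂ) + τ * I‖ ^ 2 = 1 + τ^2 := by
      rw [Complex.sq_norm, Complex.normSq_apply]
      simp
      ring
    rw [e1, e2, div_eq_mul_inv]
lemma K_integrable {y : ℝ} (hy : 0 ≤ y) : Integrable (K y) := by
  refine Integrable.mono' (integrable_inv_one_add_sq.const_mul y) ?_
    (Eventually.of_forall fun τ => le_of_eq (K_norm hy τ))
  rcases eq_or_lt_of_le hy with h | h
  · rw [← h, K_zero]
    exact aestronglyMeasurable_const
  · exact (K_cont h).aestronglyMeasurable

lemma K_norm_integral {y : ℝ} (hy : 0 ≤ y) : ∫ τ : ℝ, ‖K y τ‖ = y * π := by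
  rw [integral_congr_ae (Eventually.of_forall (K_norm hy)), MeasureTheory.integral_const_mul,
    integral_univ_inv_one_add_sq]

lemma K_integral {y : ℝ} (hy : 0 < y) :
    ∫ τ : ℝ, K y τ = 2 * π * I * (if 1 < y then (Real.log y : ℂ) else 0) :=
  perron_kernel y hy

/-- `Msum x s = ∑_{n ≤ x} μ(n) n^{-s} log(x/n)`, which equals `M_x(s) · log x`. -/
noncomputable def Msum (x : ℝ) (s : ℂ) : ℂ :=
  ∑ n ∈ Finset.Icc 1 ⌊x⌋₊,
    ((ArithmeticFunction.moebius n : ℤ) : ℂ) * (n : ℂ) ^ (-s) * (Real.log (x / n) : ℂ)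

/-- The mollifier `M_x(s)`: `M_x(s) = (∑_{n ≤ x} μ(n) n^{-s} log(x/n)) / log x` for `x > 1`,
and `0` for `0 < x ≤ 1`. -/
noncomputable def M (x : ℝ) (s : ℂ) : ℂ :=
  if 1 < x then Msum x s / (Real.log x : ℂ) else 0

lemma zeta_inv_eq {w : ℂ} (hw : 1 < w.re) :
    (riemannZeta w)⁻¹ = ∑' n, LSeries.term (fun n => ((ArithmeticFunction.moebius n : ℤ) : ℂ)) w n := by
  have h1 := ArithmeticFunction.LSeries_zeta_mul_Lseries_moebius hw
  rw [ArithmeticFunction.LSeries_zeta_eq_riemannZeta hw] at h1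
  have h2 : LSeries (fun n => ((ArithmeticFunction.moebius n : ℤ) : ℂ)) w = (riemannZeta w)⁻¹ :=
    eq_inv_of_mul_eq_one_left (by rw [mul_comm]; exact h1)
  rw [← h2]
  rfl

lemma key_lemma (t x : ℝ) (hx : 0 < x) :
    (1 / (2 * (π : ℂ) * I)) *
        ∫ τ : ℝ, ((x : ℂ) ^ (1 + τ * I) /
          riemannZeta (1/2 + I * t + (1 + τ * I)) / (1 + τ * I) ^ 2) * I
      = Msum x (1/2 + I * t) := by
  set s : ℂ := 1/2 + I * t with hs
  set cc : ℕ → ℂ := fun n => ((ArithmeticFunction.moebius n : ℤ) : ℂ) * (n : ℂ) ^ (-s) with hcc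
  set F : ℕ → ℝ → ℂ := fun n τ => cc n * K (x / n) τ with hF
  have hcc0 : cc 0 = 0 := by simp [hcc]
  have hre : ∀ τ : ℝ, 1 < (s + (1 + (τ:ℂ) * I)).re := by
    intro τ
    rw [hs]
    simp [Complex.add_re, Complex.mul_re]
    try norm_num
  -- pointwise identity
  have hpt : ∀ τ : ℝ, ((x : ℂ) ^ (1 + (τ:ℂ) * I) /
      riemannZeta (s + (1 + (τ:ℂ) * I)) / (1 + (τ:ℂ) * I) ^ 2) * I = ∑' n, F n τ := by
    intro τ
    have hz := zeta_inv_eq (hre τ)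
    have e0 : ((x : ℂ) ^ (1 + (τ:ℂ) * I) / riemannZeta (s + (1 + (τ:ℂ) * I)) /
        (1 + (τ:ℂ) * I) ^ 2) * I = (riemannZeta (s + (1 + (τ:ℂ) * I)))⁻¹ *
        ((x : ℂ) ^ (1 + (τ:ℂ) * I) / (1 + (τ:ℂ) * I) ^ 2 * I) := by
      rw [div_eq_mul_inv, div_eq_mul_inv, div_eq_mul_inv]
      ring
    rw [e0, hz, ← tsum_mul_right]
    refine tsum_congr fun n => ?_
    rcases Nat.eq_zero_or_pos n with h0 | h1
    · rw [h0, LSeries.term_zero, zero_mul, hF]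
      simp [hcc0]
    · have hn0 : (n:ℂ) ≠ 0 := Nat.cast_ne_zero.2 h1.ne'
      rw [LSeries.term_of_ne_zero h1.ne']
      rw [hF]
      simp only
      unfold K
      rw [hcc]
      simp only
      have e1 : ((x / n : ℝ) : ℂ) ^ (1 + (τ:ℂ) * I)
          = (x:ℂ) ^ (1 + (τ:ℂ) * I) * ((n:ℂ) ^ (1 + (τ:ℂ) * I))⁻¹ := by
        have : (x / n : ℝ) = x * (n:ℝ)⁻¹ := by ring
        rw [this, Complex.ofReal_mul, Complex.mul_cpow_ofReal_nonneg hx.le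
          (by positivity), Complex.ofReal_inv, Complex.ofReal_natCast,
          Complex.inv_cpow _ _ (by rw [Complex.natCast_arg]; exact Real.pi_ne_zero.symm)]
      have e2 : (n:ℂ) ^ (s + (1 + (τ:ℂ) * I)) = (n:ℂ) ^ s * (n:ℂ) ^ (1 + (τ:ℂ) * I) :=
        Complex.cpow_add _ _ hn0
      have e3 : (n:ℂ) ^ (-s) = ((n:ℂ) ^ s)⁻¹ := Complex.cpow_neg _ _
      rw [e1, e2, e3, div_eq_mul_inv, mul_inv]
      ring
  -- integrability and summability
  have hFint : ∀ n : ℕ, Integrable (F n) := fun n =>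
    (K_integrable (by positivity)).const_mul _
  have hnorm_cc : ∀ n : ℕ, 0 < n → ‖cc n‖ ≤ ((n:ℝ) ^ ((1:ℝ)/2))⁻¹ := by
    intro n hn
    rw [hcc]
    simp only [norm_mul]
    have h1 : ‖((ArithmeticFunction.moebius n : ℤ) : ℂ)‖ ≤ 1 := by
      rw [Complex.norm_intCast]
      exact_mod_cast ArithmeticFunction.abs_moebius_le_one
    have h2 : ‖(n:ℂ) ^ (-s)‖ = ((n:ℝ) ^ ((1:ℝ)/2))⁻¹ := by
      rw [Complex.norm_natCast_cpow_of_pos hn, hs]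
      have : (-(1/2 + I * (t:ℂ))).re = -(1/2) := by
        simp [Complex.mul_re]
      rw [this, Real.rpow_neg (Nat.cast_nonneg n)]
    rw [h2]
    exact mul_le_of_le_one_left (by positivity) h1
  have hFnorm : ∀ n : ℕ, ∫ τ : ℝ, ‖F n τ‖ = ‖cc n‖ * (x / n * π) := by
    intro n
    rw [hF]
    simp only [norm_mul]
    rw [MeasureTheory.integral_const_mul, K_norm_integral (by positivity)]
  have hFsum : Summable fun n : ℕ => ∫ τ : ℝ, ‖F n τ‖ := by
    refine Summable.of_nonneg_of_le
      (fun n => integral_nonneg fun τ => norm_nonneg _)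
      (fun n => ?_)
      ((Real.summable_nat_rpow_inv.2 (by norm_num : (1:ℝ) < 3/2)).mul_left (x * π))
    rw [hFnorm]
    rcases Nat.eq_zero_or_pos n with h0 | h1
    · simp [h0]
    · have hn : (0:ℝ) < n := Nat.cast_pos.2 h1
      have : ((n:ℝ) ^ ((3:ℝ)/2))⁻¹ = ((n:ℝ) ^ ((1:ℝ)/2))⁻¹ * (n:ℝ)⁻¹ := by
        rw [← Real.rpow_neg_one (n:ℝ), ← Real.rpow_neg hn.le, ← Real.rpow_neg hn.le,
          ← Real.rpow_add hn]
        norm_num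
      rw [this]
      calc ‖cc n‖ * (x / n * π) ≤ ((n:ℝ) ^ ((1:ℝ)/2))⁻¹ * (x / n * π) := by
            apply mul_le_mul_of_nonneg_right (hnorm_cc n h1) (by positivity)
        _ = x * π * (((n:ℝ) ^ ((1:ℝ)/2))⁻¹ * (n:ℝ)⁻¹) := by
            field_simp
            try ring
  -- swap
  have hswap := MeasureTheory.integral_tsum_of_summable_integral_norm hFint hFsum
  have hint_eq : ∫ τ : ℝ, ((x : ℂ) ^ (1 + (τ:ℂ) * I) /
      riemannZeta (s + (1 + (τ:ℂ) * I)) / (1 + (τ:ℂ) * I) ^ 2) * I = ∑' n, ∫ τ, F n τ := by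
    rw [hswap]
    exact integral_congr_ae (Eventually.of_forall hpt)
  rw [hint_eq]
  -- evaluate each integral
  have hFval : ∀ n : ℕ, ∫ τ, F n τ
      = cc n * (2 * π * I * (if 1 < x / (n:ℝ) then (Real.log (x / n) : ℂ) else 0)) := by
    intro n
    rcases Nat.eq_zero_or_pos n with h0 | h1
    · rw [h0, hF]
      simp only [hcc0, zero_mul]
      simp
    · rw [hF]
      simp only
      rw [MeasureTheory.integral_const_mul, K_integral (by positivity)]
  rw [tsum_congr hFval]
  have hpi : (2 * (π:ℂ) * I) ≠ 0 := by
    simp [Real.pi_ne_zero, Complex.I_ne_zero]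
  rw [← tsum_mul_left]
  have hcoef : ∀ n : ℕ, (1 / (2 * (π:ℂ) * I)) *
      (cc n * (2 * π * I * (if 1 < x / (n:ℝ) then (Real.log (x / n) : ℂ) else 0)))
      = cc n * (if 1 < x / (n:ℝ) then (Real.log (x / n) : ℂ) else 0) := by
    intro n
    field_simp
  rw [tsum_congr hcoef]
  -- tsum to finite sum
  have hvanish : ∀ n ∉ Finset.Icc 1 ⌊x⌋₊,
      cc n * (if 1 < x / (n:ℝ) then (Real.log (x / n) : ℂ) else 0) = 0 := by
    intro n hn
    rcases Nat.eq_zero_or_pos n with h0 | h1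
    · rw [h0, hcc0, zero_mul]
    · have hgt : ⌊x⌋₊ < n := by
        by_contra hle
        exact hn (Finset.mem_Icc.2 ⟨h1, not_lt.1 hle⟩)
      have hxn : x < n := (Nat.floor_lt hx.le).1 hgt
      have : ¬ (1 < x / (n:ℝ)) := by
        rw [not_lt, div_le_one (by positivity)]
        exact hxn.le.trans (le_refl _)
      rw [if_neg this, mul_zero]
  rw [tsum_eq_sum hvanish]
  unfold Msum
  refine Finset.sum_congr rfl fun n hn => ?_
  obtain ⟨h1, h2⟩ := Finset.mem_Icc.1 hn
  have hnx : (n:ℝ) ≤ x := (Nat.le_floor_iff hx.le).1 h2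
  have hnpos : (0:ℝ) < n := Nat.cast_pos.2 h1
  by_cases hlt : 1 < x / (n:ℝ)
  · rw [if_pos hlt, hcc]
    try ring
  · have hone : x / (n:ℝ) = 1 := le_antisymm (not_lt.1 hlt) ((one_le_div hnpos).2 hnx)
    rw [if_neg hlt, hone, Real.log_one, hcc]
    try simp
/-- `M_x(1/2+it) log x = (1/(2πi)) ∫_{(1)} x^z ζ(1/2+it+z)^{-1} z^{-2} dz`, the contour
integral over `Re z = 1` being written via `z = 1 + iτ`, `dz = i dτ`. -/
theorem M_eq_perron_integral (t : ℝ) (x : ℝ) (hx : 0 < x) :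
    M x (1/2 + I * t) * (Real.log x : ℂ) =
      (1 / (2 * (π : ℂ) * I)) *
        ∫ τ : ℝ, ((x : ℂ) ^ (1 + τ * I) /
          riemannZeta (1/2 + I * t + (1 + τ * I)) / (1 + τ * I) ^ 2) * I := by

  rw [key_lemma t x hx]
  by_cases h1 : 1 < x
  · unfold M
    rw [if_pos h1, div_mul_cancel₀]
    exact Complex.ofReal_ne_zero.2 (ne_of_gt (Real.log_pos h1))
  · unfold M
    rw [if_neg h1, zero_mul]
    symm
    unfold Msum
    have hfl : ⌊x⌋₊ ≤ 1 := Nat.floor_le_one_of_le_one (not_lt.1 h1)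
    rcases Nat.le_one_iff_eq_zero_or_eq_one.1 hfl with h | h <;> rw [h]
    · simp
    · have hx1 : (1:ℝ) ≤ x := by
        have h2 := Nat.floor_le hx.le
        rw [h] at h2
        exact_mod_cast h2
      have hxe : x = 1 := le_antisymm (not_lt.1 h1) hx1
      subst hxe
      simp
end

section
/- For every real t and every complex w with Re w > 3/2, the Mellin transform ∫_1^∞ M_x(1/2 + it) (log x) x^{-w} dx converges and equals 1/((w−1)² ζ(w − 1/2 + it)). -/
open Complex MeasureTheory Real

open Set Filter Topology

lemma real_mellin_log (a r : ℝ) (ha : 1 ≤ a) (hr : 1 < r) :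
    IntegrableOn (fun x : ℝ => Real.log (x / a) * x ^ (-r)) (Ioi a) ∧
    ∫ x in Ioi a, Real.log (x / a) * x ^ (-r) = a ^ (1 - r) / (r - 1) ^ 2 := by
  have ha0 : (0:ℝ) < a := lt_of_lt_of_le one_pos ha
  set g : ℝ → ℝ := fun x => x ^ (1 - r) * Real.log (x / a) / (1 - r) - x ^ (1 - r) / (1 - r) ^ 2
    with hg
  have hr0 : (1 : ℝ) - r ≠ 0 := by linarith
  have hderiv : ∀ x ∈ Ici a, HasDerivAt g (Real.log (x / a) * x ^ (-r)) x := by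
    intro x hx
    have hx0 : (0:ℝ) < x := lt_of_lt_of_le ha0 hx
    have h1 : HasDerivAt (fun y : ℝ => y ^ (1 - r)) ((1 - r) * x ^ (-r)) x := by
      have := Real.hasDerivAt_rpow_const (x := x) (p := 1 - r) (Or.inl hx0.ne')
      convert this using 2
      ring_nf
    have h2 : HasDerivAt (fun y : ℝ => Real.log (y / a)) (1 / x) x := by
      have hd : HasDerivAt (fun y : ℝ => y / a) (1 / a) x := by
        simpa using (hasDerivAt_id x).div_const a
      have := (Real.hasDerivAt_log (div_ne_zero hx0.ne' ha0.ne')).comp x hd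
      refine this.congr_deriv (Eq.symm ?_)
      field_simp
    have h3 := ((h1.mul h2).div_const (1 - r)).sub (h1.div_const ((1 - r) ^ 2))
    refine h3.congr_deriv (Eq.symm ?_)
    have hxr : x ^ (1 - r) * (1 / x) = x ^ (-r) := by
      rw [mul_one_div, ← Real.rpow_sub_one hx0.ne']
      norm_num
    rw [hxr]
    field_simp
    ring
  have hnonneg : ∀ x ∈ Ioi a, 0 ≤ Real.log (x / a) * x ^ (-r) := by
    intro x hx
    have hx0 : (0:ℝ) < x := lt_trans ha0 hx
    have h1 : 1 ≤ x / a := (one_le_div ha0).mpr (le_of_lt hx)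
    exact mul_nonneg (Real.log_nonneg h1) (Real.rpow_nonneg hx0.le _)
  have h1 : Tendsto (fun x : ℝ => x ^ (1 - r)) atTop (𝓝 0) := by
    have := tendsto_rpow_neg_atTop (y := r - 1) (by linarith)
    rwa [neg_sub] at this
  have h2 : Tendsto (fun x : ℝ => x ^ (1 - r) * Real.log x) atTop (𝓝 0) := by
    have := (isLittleO_log_rpow_atTop (by linarith : (0:ℝ) < r - 1)).tendsto_div_nhds_zero
    refine this.congr' ?_
    filter_upwards [eventually_gt_atTop (0:ℝ)] with x hx
    rw [div_eq_mul_inv, ← Real.rpow_neg hx.le, neg_sub, mul_comm]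
  have htend : Tendsto g atTop (𝓝 0) := by
    have h3 := (((h2.sub (h1.mul_const (Real.log a))).div_const (1 - r)).sub
      (h1.div_const ((1 - r) ^ 2)))
    simp only [zero_mul, sub_zero, zero_div, zero_sub, neg_zero, mul_zero] at h3
    refine Tendsto.congr' ?_ h3
    filter_upwards [eventually_gt_atTop (0:ℝ)] with x hx
    simp only [hg]
    rw [Real.log_div hx.ne' ha0.ne']
    ring
  have key := integral_Ioi_of_hasDerivAt_of_nonneg' hderiv hnonneg htend
  have hint := integrableOn_Ioi_deriv_of_nonneg' hderiv hnonneg htend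
  refine ⟨hint, ?_⟩
  rw [key, hg]
  simp only [div_self ha0.ne', Real.log_one, mul_zero, zero_div, zero_sub, sub_neg_eq_add,
    zero_add, zero_mul]
  rw [show ((1:ℝ)-r)^2 = (r-1)^2 by ring]

lemma cpow_meas (w : ℂ) : Measurable (fun x : ℝ => (x : ℂ) ^ (-w)) :=
  (Complex.measurable_ofReal).pow measurable_const

lemma norm_integrand (a : ℝ) (w : ℂ) (ha : 0 < a) {x : ℝ} (hx : x ∈ Ioi a) :
    ‖(Real.log (x / a) : ℂ) * (x : ℂ) ^ (-w)‖ = Real.log (x / a) * x ^ (-w.re) := by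
  have hx0 : (0:ℝ) < x := lt_trans ha hx
  have h1 : (1:ℝ) ≤ x / a := (one_le_div ha).mpr (le_of_lt hx)
  rw [norm_mul, Complex.norm_real, Real.norm_eq_abs,
    Complex.norm_cpow_eq_rpow_re_of_pos hx0, neg_re, _root_.abs_of_nonneg (Real.log_nonneg h1)]

lemma complex_mellin_log (a : ℝ) (w : ℂ) (ha : 1 ≤ a) (hw : 1 < w.re) :
    IntegrableOn (fun x : ℝ => (Real.log (x / a) : ℂ) * (x : ℂ) ^ (-w)) (Ioi a) ∧
    ∫ x in Ioi a, (Real.log (x / a) : ℂ) * (x : ℂ) ^ (-w)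
      = (a : ℂ) ^ (1 - w) / (w - 1) ^ 2 := by
  have ha0 : (0:ℝ) < a := lt_of_lt_of_le one_pos ha
  obtain ⟨hRint, hRval⟩ := real_mellin_log a w.re ha hw
  have hmeas : AEStronglyMeasurable (fun x : ℝ => (Real.log (x / a) : ℂ) * (x : ℂ) ^ (-w))
      (volume.restrict (Ioi a)) := by
    refine Measurable.aestronglyMeasurable ?_
    exact ((Complex.measurable_ofReal.comp ((Real.measurable_log).comp
      (measurable_id.div_const a))).mul (cpow_meas w))
  have hint : IntegrableOn (fun x : ℝ => (Real.log (x / a) : ℂ) * (x : ℂ) ^ (-w)) (Ioi a) := by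
    refine Integrable.mono' hRint hmeas ?_
    filter_upwards [ae_restrict_mem measurableSet_Ioi] with x hx
    rw [norm_integrand a w ha0 hx]
  refine ⟨hint, ?_⟩
  have hw0 : (1:ℂ) - w ≠ 0 := by
    intro h
    have := congrArg Complex.re h
    simp at this
    linarith
  set g : ℝ → ℂ := fun x => (x:ℂ) ^ (1 - w) * (Real.log (x / a) : ℂ) / (1 - w)
      - (x:ℂ) ^ (1 - w) / (1 - w) ^ 2 with hg
  have hderiv : ∀ x ∈ Ici a, HasDerivAt g ((Real.log (x / a) : ℂ) * (x:ℂ) ^ (-w)) x := by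
    intro x hx
    have hx0 : (0:ℝ) < x := lt_of_lt_of_le ha0 hx
    have h1 : HasDerivAt (fun y : ℝ => (y:ℂ) ^ (1 - w)) ((1 - w) * (x:ℂ) ^ (-w)) x := by
      have h := hasDerivAt_ofReal_cpow_const' hx0.ne' (r := -w) (by
        intro h; rw [neg_inj] at h; rw [h] at hw; norm_num at hw)
      have h2 := h.const_mul (1 - w)
      have : -w + 1 = 1 - w := by ring
      rw [this] at h2
      refine h2.congr_of_eventuallyEq (Eventually.of_forall fun y => ?_)
      show (y:ℂ) ^ (1 - w) = (1 - w) * ((y:ℂ) ^ (1 - w) / (1 - w))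
      rw [mul_div_cancel₀ _ hw0]
    have h2 : HasDerivAt (fun y : ℝ => ((Real.log (y / a) : ℝ) : ℂ)) ((1/x : ℝ) : ℂ) x := by
      have hd : HasDerivAt (fun y : ℝ => y / a) (1 / a) x := by
        simpa using (hasDerivAt_id x).div_const a
      have hrd := (Real.hasDerivAt_log (div_ne_zero hx0.ne' ha0.ne')).comp x hd
      have : HasDerivAt (fun y : ℝ => Real.log (y / a)) (1 / x) x := by
        refine hrd.congr_deriv (Eq.symm ?_)
        field_simp
      exact this.ofReal_comp
    have h3 := ((h1.mul h2).div_const (1 - w)).sub (h1.div_const ((1 - w) ^ 2))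
    refine h3.congr_deriv (Eq.symm ?_)
    have hx0' : (x:ℂ) ≠ 0 := by exact_mod_cast hx0.ne'
    have hxr : (x:ℂ) ^ (1 - w) * ((1/x : ℝ) : ℂ) = (x:ℂ) ^ (-w) := by
      push_cast
      rw [mul_one_div, div_eq_mul_inv, ← Complex.cpow_neg_one,
        ← Complex.cpow_add _ _ hx0', show (1:ℂ) - w + -1 = -w by ring]
    rw [hxr]
    field_simp
    ring
  have hnorm_g : ∀ x : ℝ, 0 < x → ‖g x‖ ≤
      x ^ (1 - w.re) * |Real.log (x/a)| / ‖(1:ℂ) - w‖ + x ^ (1 - w.re) / ‖((1:ℂ) - w)^2‖ := by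
    intro x hx0
    rw [hg]
    refine le_trans (norm_sub_le _ _) ?_
    gcongr
    · rw [norm_div, norm_mul,
        Complex.norm_cpow_eq_rpow_re_of_pos hx0, Complex.norm_real, Real.norm_eq_abs, sub_re, one_re]
    · rw [norm_div,
        Complex.norm_cpow_eq_rpow_re_of_pos hx0, sub_re, one_re]
  have htend : Tendsto g atTop (𝓝 0) := by
    have hA : Tendsto (fun x : ℝ => x ^ (1 - w.re)) atTop (𝓝 0) := by
      have := tendsto_rpow_neg_atTop (y := w.re - 1) (by linarith)
      rwa [neg_sub] at this
    have hB : Tendsto (fun x : ℝ => x ^ (1 - w.re) * Real.log x) atTop (𝓝 0) := by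
      have := (isLittleO_log_rpow_atTop (by linarith : (0:ℝ) < w.re - 1)).tendsto_div_nhds_zero
      refine this.congr' ?_
      filter_upwards [eventually_gt_atTop (0:ℝ)] with x hx
      rw [div_eq_mul_inv, ← Real.rpow_neg hx.le, neg_sub, mul_comm]
    have hC : Tendsto (fun x : ℝ =>
        (x ^ (1 - w.re) * Real.log x - x ^ (1 - w.re) * Real.log a) / ‖(1:ℂ) - w‖
        + x ^ (1 - w.re) / ‖((1:ℂ) - w) ^ 2‖) atTop (𝓝 0) := by
      have h3 := ((hB.sub (hA.mul_const (Real.log a))).div_const ‖(1:ℂ) - w‖).add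
        (hA.div_const ‖((1:ℂ) - w) ^ 2‖)
      simpa using h3
    refine squeeze_zero_norm' ?_ hC
    filter_upwards [eventually_ge_atTop a, eventually_gt_atTop (0:ℝ)] with x hxa hx0
    have h1 : (1:ℝ) ≤ x / a := (one_le_div ha0).mpr hxa
    have hb := hnorm_g x hx0
    rw [_root_.abs_of_nonneg (Real.log_nonneg h1), Real.log_div hx0.ne' ha0.ne'] at hb
    refine le_trans hb (le_of_eq ?_)
    ring
  have key := integral_Ioi_of_hasDerivAt_of_tendsto' hderiv hint htend
  rw [key, hg]
  simp only [div_self ha0.ne', Real.log_one, Complex.ofReal_zero, mul_zero, zero_div, zero_sub,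
    sub_neg_eq_add, zero_add]
  rw [show ((1:ℂ)-w)^2 = (w-1)^2 by ring]

/-- For `Re w > 3/2`, the Mellin transform `∫_1^∞ M_x(1/2+it) (log x) x^{-w} dx`
converges and equals `1/((w-1)² ζ(w - 1/2 + it))`. -/
theorem mellin_M_eq (t : ℝ) (w : ℂ) (hw : 3/2 < w.re) :
    IntegrableOn (fun x : ℝ => Msum x (1/2 + I * t) * (x : ℂ) ^ (-w)) (Set.Ioi 1) ∧
    ∫ x in Set.Ioi (1 : ℝ), Msum x (1/2 + I * t) * (x : ℂ) ^ (-w)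
      = 1 / ((w - 1) ^ 2 * riemannZeta (w - 1/2 + I * t)) := by
  have hw1 : 1 < w.re := by linarith
  set s : ℂ := 1/2 + I * t with hs
  set c : ℕ → ℂ := fun n => ((ArithmeticFunction.moebius n : ℤ) : ℂ) * (n : ℂ) ^ (-s) with hc
  set F : ℕ → ℝ → ℂ := fun n => Set.indicator (Ioi (n : ℝ))
    (fun y => c n * (Real.log (y / n) : ℂ) * (y : ℂ) ^ (-w)) with hF
  have hc0 : c 0 = 0 := by simp [hc]
  have hF0 : F 0 = fun _ => 0 := by
    funext x
    simp [hF, hc0]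
  have hFmeas : ∀ n, Measurable (F n) := by
    intro n
    refine Measurable.indicator ?_ measurableSet_Ioi
    exact ((measurable_const.mul (Complex.measurable_ofReal.comp
      (Real.measurable_log.comp (measurable_id.div_const _)))).mul
      ((Complex.measurable_ofReal).pow measurable_const))
  -- vanishing beyond the floor
  have hFzero : ∀ (x : ℝ) (n : ℕ), ⌊x⌋₊ < n → F n x = 0 := by
    intro x n hn
    have hx : x < n := Nat.lt_of_floor_lt hn
    exact Set.indicator_of_notMem (by simpa using not_lt.mpr hx.le) _
  -- Claim A
  have claimA : ∀ x ∈ Ioi (1:ℝ), Msum x s * (x : ℂ) ^ (-w) = ∑' n, F n x := by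
    intro x hx
    have hx1 : (1:ℝ) < x := hx
    have hx0 : (0:ℝ) < x := lt_trans one_pos hx1
    rw [tsum_eq_sum (s := Finset.Icc 1 ⌊x⌋₊) ?_]
    · rw [Msum, Finset.sum_mul]
      refine Finset.sum_congr rfl fun n hn => ?_
      rw [Finset.mem_Icc] at hn
      have hnx : (n : ℝ) ≤ x := le_trans (Nat.cast_le.mpr hn.2) (Nat.floor_le hx0.le)
      rcases lt_or_eq_of_le hnx with h | h
      · simp only [hF]
        rw [Set.indicator_of_mem (by simpa using h : x ∈ Ioi (n:ℝ))]
      · simp only [hF]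
        rw [Set.indicator_of_notMem (by simp [h]) _]
        rw [← h, div_self (show (n:ℝ) ≠ 0 from ne_of_gt (lt_of_lt_of_le one_pos (by exact_mod_cast hn.1)))]
        simp
    · intro n hn
      rw [Finset.mem_Icc] at hn
      push_neg at hn
      rcases Nat.eq_zero_or_pos n with h0 | h1
      · rw [h0, hF0]
      · exact hFzero x n (hn (by omega))
  -- per-term integrability and values
  have hInner : ∀ n : ℕ, 1 ≤ n →
      IntegrableOn (fun y : ℝ => c n * ((Real.log (y / n) : ℂ) * (y : ℂ) ^ (-w))) (Ioi (n:ℝ)) ∧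
      IntegrableOn (F n) (Ioi 1) ∧
      ∫ x in Ioi (1:ℝ), F n x = c n * ((n : ℂ) ^ (1 - w) / (w - 1) ^ 2) := by
    intro n hn
    have hn1 : (1:ℝ) ≤ n := by exact_mod_cast hn
    obtain ⟨hi, hv⟩ := complex_mellin_log (n : ℝ) w hn1 hw1
    have hic := hi.const_mul (c n)
    refine ⟨hic, ?_, ?_⟩
    · have heq : F n = Set.indicator (Ioi (n:ℝ))
          (fun y => c n * ((Real.log (y / n) : ℂ) * (y : ℂ) ^ (-w))) := by
        funext y; rw [hF]; simp [mul_assoc]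
      rw [heq]
      exact ((IntegrableOn.integrable_indicator hic measurableSet_Ioi).integrableOn)
    · have heq : F n = Set.indicator (Ioi (n:ℝ))
          (fun y => c n * ((Real.log (y / n) : ℂ) * (y : ℂ) ^ (-w))) := by
        funext y; rw [hF]; simp [mul_assoc]
      rw [heq, integral_indicator measurableSet_Ioi, Measure.restrict_restrict measurableSet_Ioi,
        Set.inter_eq_self_of_subset_left (Ioi_subset_Ioi hn1), integral_const_mul, hv]
      norm_cast
  -- lintegral of norms
  set b : ℕ → ℝ := fun n => ‖c n‖ * ((n:ℝ) ^ (1 - w.re) / (w.re - 1) ^ 2) with hb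
  have hLint : ∀ n : ℕ, ∫⁻ x in Ioi (1:ℝ), ‖F n x‖₊ = ENNReal.ofReal (b n) := by
    intro n
    rcases Nat.eq_zero_or_pos n with h0 | h1
    · rw [h0, hF0]
      simp [hb, h0, hc0]
    · have hn1 : (1:ℝ) ≤ n := by exact_mod_cast h1
      have hn0 : (0:ℝ) < n := lt_of_lt_of_le one_pos hn1
      obtain ⟨hRi, hRv⟩ := real_mellin_log (n:ℝ) w.re hn1 hw1
      set H : ℝ → ℝ := Set.indicator (Ioi (n:ℝ))
        (fun y => ‖c n‖ * (Real.log (y / n) * y ^ (-w.re))) with hH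
      have hHint : Integrable H (volume.restrict (Ioi 1)) :=
        ((IntegrableOn.integrable_indicator (hRi.const_mul _) measurableSet_Ioi).integrableOn)
      have hHnn : 0 ≤ᵐ[volume.restrict (Ioi 1)] H := by
        refine Eventually.of_forall fun x => ?_
        refine Set.indicator_nonneg (fun y hy => ?_) x
        have hy0 : (0:ℝ) < y := lt_trans hn0 hy
        have h1y : (1:ℝ) ≤ y / n := (one_le_div hn0).mpr (le_of_lt hy)
        exact mul_nonneg (norm_nonneg _)
          (mul_nonneg (Real.log_nonneg h1y) (Real.rpow_nonneg hy0.le _))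
      have hnorm : ∀ x, (‖F n x‖₊ : ENNReal) = ENNReal.ofReal (H x) := by
        intro x
        by_cases hx : x ∈ Ioi (n:ℝ)
        · simp only [hF, hH]
          rw [Set.indicator_of_mem hx, Set.indicator_of_mem hx, ← enorm_eq_nnnorm, ← ofReal_norm]
          congr 1
          rw [mul_assoc, norm_mul, norm_integrand (n:ℝ) w hn0 hx]
        · simp only [hF, hH]
          rw [Set.indicator_of_notMem hx, Set.indicator_of_notMem hx]
          simp
      calc ∫⁻ x in Ioi (1:ℝ), ‖F n x‖₊ = ∫⁻ x in Ioi (1:ℝ), ENNReal.ofReal (H x) := by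
            simp_rw [hnorm]
        _ = ENNReal.ofReal (∫ x in Ioi (1:ℝ), H x) :=
            (ofReal_integral_eq_lintegral_ofReal hHint hHnn).symm
        _ = ENNReal.ofReal (b n) := by
            rw [hH, integral_indicator measurableSet_Ioi,
              Measure.restrict_restrict measurableSet_Ioi,
              Set.inter_eq_self_of_subset_left (Ioi_subset_Ioi hn1), integral_const_mul, hRv, hb]
  -- summability of the bounds
  have hbnn : ∀ n, 0 ≤ b n := fun n => mul_nonneg (norm_nonneg _)
    (div_nonneg (Real.rpow_nonneg (Nat.cast_nonneg n) _) (sq_nonneg _))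
  have hbsum : Summable b := by
    have hS : Summable (fun n : ℕ => (n:ℝ) ^ (1/2 - w.re) * ((w.re - 1) ^ 2)⁻¹) :=
      (Real.summable_nat_rpow.mpr (by linarith)).mul_right _
    refine Summable.of_nonneg_of_le hbnn (fun n => ?_) hS
    rcases Nat.eq_zero_or_pos n with h0 | h1
    · rw [h0]
      simp only [hb, hc0, norm_zero, zero_mul]
      positivity
    · have hn0 : (0:ℝ) < n := by exact_mod_cast h1
      have hcle : ‖c n‖ ≤ (n:ℝ) ^ (-(1/2) : ℝ) := by
        simp only [hc]
        rw [norm_mul]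
        have h2 : ‖(n:ℂ) ^ (-s)‖ = (n:ℝ) ^ (-s).re := by
          rw [show ((n:ℕ):ℂ) = (((n:ℝ):ℝ):ℂ) by push_cast; ring]
          rw [Complex.norm_cpow_eq_rpow_re_of_pos hn0]
        have h3 : (-s).re = -(1/2) := by
          simp [hs]
        have h4 : ‖((ArithmeticFunction.moebius n : ℤ) : ℂ)‖ ≤ 1 := by
          rw [show (((ArithmeticFunction.moebius n : ℤ)) : ℂ)
            = (((ArithmeticFunction.moebius n : ℤ) : ℝ) : ℂ) by push_cast; ring]
          rw [Complex.norm_real, Real.norm_eq_abs]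
          rw [show |((ArithmeticFunction.moebius n : ℤ) : ℝ)|
            = ((|(ArithmeticFunction.moebius n : ℤ)| : ℤ) : ℝ) by push_cast; ring]
          exact_mod_cast ArithmeticFunction.abs_moebius_le_one
        calc ‖((ArithmeticFunction.moebius n : ℤ) : ℂ)‖ * ‖(n:ℂ) ^ (-s)‖
            ≤ 1 * ‖(n:ℂ) ^ (-s)‖ := by gcongr
          _ = (n:ℝ) ^ (-(1/2) : ℝ) := by rw [one_mul, h2, h3]
      calc b n = ‖c n‖ * ((n:ℝ) ^ (1 - w.re) / (w.re - 1) ^ 2) := rfl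
        _ ≤ (n:ℝ) ^ (-(1/2) : ℝ) * ((n:ℝ) ^ (1 - w.re) / (w.re - 1) ^ 2) := by
            gcongr
        _ = (n:ℝ) ^ (1/2 - w.re) * ((w.re - 1) ^ 2)⁻¹ := by
            rw [show (n:ℝ)^(1-w.re)/(w.re-1)^2 = (n:ℝ)^(1-w.re) * ((w.re-1)^2)⁻¹
                from div_eq_mul_inv _ _,
              ← mul_assoc, ← Real.rpow_add hn0,
              show -(1/2 : ℝ) + (1 - w.re) = 1/2 - w.re by ring]
  -- finiteness of the sum of lintegrals
  have hne : ∑' n, ∫⁻ x in Ioi (1:ℝ), ‖F n x‖₊ ≠ ⊤ := by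
    calc ∑' n, ∫⁻ x in Ioi (1:ℝ), ‖F n x‖₊ = ∑' n, ENNReal.ofReal (b n) := tsum_congr hLint
      _ = ENNReal.ofReal (∑' n, b n) := (ENNReal.ofReal_tsum_of_nonneg hbnn hbsum).symm
      _ ≠ ⊤ := ENNReal.ofReal_ne_top
  -- measurability of the tsum
  have hmeasT : Measurable (fun x : ℝ => ∑' n, F n x) := by
    apply measurable_of_tendsto_metrizable
      (f := fun m => fun x : ℝ => ∑ n ∈ Finset.range m, F n x)
      (fun m => Finset.measurable_sum _ fun n _ => hFmeas n)
    rw [tendsto_pi_nhds]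
    intro x
    have hsupp : ∀ n ∉ Finset.range (⌊x⌋₊ + 1), F n x = 0 := by
      intro n hn
      rw [Finset.mem_range, not_lt] at hn
      exact hFzero x n (by omega)
    exact (summable_of_ne_finset_zero hsupp).hasSum.tendsto_sum_nat
  have hsummN : ∀ x : ℝ, Summable (fun n => (‖F n x‖₊ : NNReal)) := by
    intro x
    refine summable_of_ne_finset_zero (s := Finset.range (⌊x⌋₊ + 1)) ?_
    intro n hn
    rw [Finset.mem_range, not_lt] at hn
    rw [hFzero x n (by omega)]
    simp
  have hIntT : Integrable (fun x : ℝ => ∑' n, F n x) (volume.restrict (Ioi 1)) := by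
    refine ⟨hmeasT.aestronglyMeasurable, ?_⟩
    have hb1 : ∀ x : ℝ, (‖∑' n, F n x‖₊ : ENNReal) ≤ ∑' n, (‖F n x‖₊ : ENNReal) := by
      intro x
      calc (‖∑' n, F n x‖₊ : ENNReal) ≤ ((∑' n, ‖F n x‖₊ : NNReal) : ENNReal) :=
            ENNReal.coe_le_coe.mpr (nnnorm_tsum_le (hsummN x))
        _ = ∑' n, (‖F n x‖₊ : ENNReal) := ENNReal.coe_tsum (hsummN x)
    calc ∫⁻ x in Ioi (1:ℝ), ‖∑' n, F n x‖₊ ≤ ∫⁻ x in Ioi (1:ℝ), ∑' n, (‖F n x‖₊ : ENNReal) :=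
          lintegral_mono hb1
      _ = ∑' n, ∫⁻ x in Ioi (1:ℝ), ‖F n x‖₊ :=
          lintegral_tsum (fun n => (hFmeas n).nnnorm.coe_nnreal_ennreal.aemeasurable)
      _ < ⊤ := lt_top_iff_ne_top.mpr hne
  constructor
  · refine hIntT.congr ?_
    filter_upwards [ae_restrict_mem measurableSet_Ioi] with x hx
    exact (claimA x hx).symm
  · rw [setIntegral_congr_fun measurableSet_Ioi (fun x hx => claimA x hx)]
    rw [integral_tsum (fun n => (hFmeas n).aestronglyMeasurable) hne]
    have hterm : ∀ n : ℕ, ∫ x in Ioi (1:ℝ), F n x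
        = LSeries.term (fun k : ℕ => ((ArithmeticFunction.moebius k : ℤ) : ℂ))
            (w - 1/2 + I * t) n * (1 / (w - 1) ^ 2) := by
      intro n
      rcases Nat.eq_zero_or_pos n with h0 | h1
      · rw [h0, hF0]
        simp
      · obtain ⟨-, -, hv⟩ := hInner n h1
        have hn' : n ≠ 0 := Nat.pos_iff_ne_zero.mp h1
        have hn0 : (n:ℂ) ≠ 0 := Nat.cast_ne_zero.mpr hn'
        rw [hv, LSeries.term_of_ne_zero hn']
        rw [show c n * ((n:ℂ) ^ (1 - w) / (w - 1) ^ 2)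
            = (c n * (n:ℂ) ^ (1 - w)) * (1 / (w - 1) ^ 2) by ring]
        congr 1
        simp only [hc]
        rw [mul_assoc, ← Complex.cpow_add _ _ hn0,
          show -s + (1 - w) = -(w - 1/2 + I * t) by rw [hs]; ring,
          Complex.cpow_neg]
        exact (div_eq_mul_inv _ _).symm
    rw [tsum_congr hterm, tsum_mul_right]
    have hzre : 1 < (w - 1/2 + I * (t:ℂ)).re := by
      simp only [Complex.add_re, Complex.sub_re, Complex.mul_re, Complex.I_re, Complex.I_im,
        Complex.ofReal_re, Complex.ofReal_im]
      norm_num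
      linarith
    have hL : LSeries (fun k : ℕ => ((ArithmeticFunction.moebius k : ℤ) : ℂ))
        (w - 1/2 + I * t) = (riemannZeta (w - 1/2 + I * t))⁻¹ := by
      have h1 := ArithmeticFunction.LSeries_zeta_mul_Lseries_moebius hzre
      have h2 := ArithmeticFunction.LSeries_zeta_eq_riemannZeta hzre
      rw [h2] at h1
      exact eq_inv_of_mul_eq_one_left (by rw [mul_comm]; exact h1)
    rw [show (∑' n, LSeries.term (fun k : ℕ => ((ArithmeticFunction.moebius k : ℤ) : ℂ))
        (w - 1/2 + I * t) n)
      = LSeries (fun k : ℕ => ((ArithmeticFunction.moebius k : ℤ) : ℂ)) (w - 1/2 + I * t)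
      from rfl, hL]
    rw [one_div, one_div, ← mul_inv, mul_comm]
    exact (one_div _).symm
end
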